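/- Let M be a matroid on a finite ground set E and let F ⊆ E with |F| ≥ 2 and |E ∖ F| ≥ 2. If the restriction M|F is connected and the contraction M/F is connected, then F is a cyclic flat of M; that is, F is a flat of M and F is a union of circuits of M. -/

import Mathlib

open Matroid Set

/-- A circuit of a matroid: a minimal dependent set. -/
def Matroid.IsCircuitOf {α : Type*} (M : Matroid α) (C : Set α) : Prop :=
  M.Dep C ∧ ∀ D ⊂ C, ¬ M.Dep D

/-- A union of circuits (a cyclic set) of a matroid. -/
def Matroid.UnionOfCircuits {α : Type*} (M : Matroid α) (C : Set α) : Prop :=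
  ∃ 𝒞 : Set (Set α), (∀ D ∈ 𝒞, M.IsCircuitOf D) ∧ C = ⋃₀ 𝒞

/-- A matroid is connected if its ground set is nonempty and any two elements of the
ground set are equal or lie on a common circuit. -/
def Matroid.Conn {α : Type*} (M : Matroid α) : Prop :=
  M.E.Nonempty ∧ ∀ x ∈ M.E, ∀ y ∈ M.E, x = y ∨ ∃ C, M.IsCircuitOf C ∧ x ∈ C ∧ y ∈ C

/-- The rank of a set in a matroid: the maximal size of an independent subset. -/
noncomputable def Matroid.rk' {α : Type*} (M : Matroid α) (X : Set α) : ℕ :=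
  sSup (Set.ncard '' {I | M.Indep I ∧ I ⊆ X})

/-- Contraction of a matroid by a set, defined via duality. -/
def Matroid.contractBy {α : Type*} (M : Matroid α) (C : Set α) : Matroid α :=
  (M✶ ↾ (M.E \ C))✶

/-- If `e` lies in the closure of `F` but not in `F`, then `{e}` is dependent in `M.contractBy F`
(that is, `e` is a loop of the contraction). -/
lemma loop_of_contractBy {α : Type*} (M : Matroid α) (F : Set α) {e : α}
    (he : e ∈ M.closure F) (heF : e ∉ F) (hFE : F ⊆ M.E) :
    ¬ (M.contractBy F).Indep {e} := by
  intro hi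
  have heE : e ∈ M.E := M.closure_subset_ground F he
  rw [Matroid.contractBy, Matroid.dual_indep_iff_exists'] at hi
  obtain ⟨-, B, hB, hdj⟩ := hi
  rw [Matroid.isBase_restrict_iff (show M.E \ F ⊆ M✶.E from diff_subset)] at hB
  have heB : e ∉ B := fun h => hdj.ne_of_mem rfl h rfl
  have hBsub : B ⊆ M.E \ F := hB.subset
  have hBE : B ⊆ M.E := fun x hx => (hBsub hx).1
  have hdep : M✶.Dep (insert e B) := hB.insert_dep ⟨⟨heE, heF⟩, heB⟩
  apply hdep.not_indep
  rw [← Matroid.coindep_def]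
  have hsub : insert e B ⊆ M.E := insert_subset heE hBE
  rw [Matroid.coindep_iff_compl_spanning hsub]
  have hBco : M.Coindep B := Matroid.coindep_def.mpr hB.indep
  have hsp : M.Spanning (M.E \ B) := hBco.compl_spanning
  have hF' : F ⊆ M.E \ insert e B := by
    intro x hx
    refine ⟨hFE hx, ?_⟩
    rintro (rfl | hxB)
    · exact heF hx
    · exact (hBsub hxB).2 hx
  have h1 : M.E \ B ⊆ M.closure (M.E \ insert e B) := by
    intro x hx
    by_cases hxe : x = e
    · subst hxe
      exact M.closure_subset_closure hF' he
    · exact M.subset_closure (M.E \ insert e B) diff_subset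
        ⟨hx.1, fun h => h.elim hxe (fun h' => hx.2 h')⟩
  have h2 : M.closure (M.E \ B) ⊆ M.closure (M.E \ insert e B) :=
    M.closure_subset_closure_of_subset_closure h1
  rw [hsp.closure_eq] at h2
  exact (Matroid.spanning_iff_ground_subset_closure diff_subset).mpr h2

/-- If `F ⊆ M.E` with `|F| ≥ 2` and `|M.E \ F| ≥ 2`, and both the
restriction `M ↾ F` and the contraction `M / F` are connected, then `F` is a cyclic flat
of `M`: a flat that is a union of circuits. -/
theorem flacet_is_cyclic_flat {α : Type*} (M : Matroid α) (hfin : M.E.Finite)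
    (F : Set α) (hFE : F ⊆ M.E) (h2 : 2 ≤ F.ncard) (h2c : 2 ≤ (M.E \ F).ncard)
    (hres : (M ↾ F).Conn) (hcon : (M.contractBy F).Conn) :
    M.IsFlat F ∧ M.UnionOfCircuits F := by
  have hNE : (M.contractBy F).E = M.E \ F := rfl
  constructor
  · -- F is a flat
    have hclosure : M.closure F = F := by
      refine subset_antisymm ?_ (M.subset_closure F hFE)
      intro e he
      by_contra heF
      have heE : e ∈ M.E := M.closure_subset_ground F he
      have hdep : ¬ (M.contractBy F).Indep {e} := loop_of_contractBy M F he heF hFE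
      -- find another element of M.E \ F
      obtain ⟨y, hy, hye⟩ := Set.exists_ne_of_one_lt_ncard (lt_of_lt_of_le one_lt_two h2c) e
      have hcase := hcon.2 e (by rw [hNE]; exact ⟨heE, heF⟩) y (by rw [hNE]; exact hy)
      rcases hcase with rfl | ⟨C, hC, heC, hyC⟩
      · exact hye rfl
      · refine hC.2 {e} ?_ ?_
        · refine (singleton_subset_iff.mpr heC).ssubset_of_ne ?_
          intro h
          rw [← h] at hyC
          exact hye hyC
        · rw [Matroid.dep_iff]
          exact ⟨hdep, singleton_subset_iff.mpr (hC.1.subset_ground heC)⟩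
    refine ⟨fun I X hIF hIX => ?_, hFE⟩
    have : X ⊆ M.closure X := M.subset_closure X hIX.subset_ground
    rw [← hIX.closure_eq_closure, hIF.closure_eq_closure, hclosure] at this
    exact this
  · -- F is a union of circuits
    refine ⟨{C | (M ↾ F).IsCircuitOf C}, fun D hD => ?_, ?_⟩
    · obtain ⟨hDdep, hDmin⟩ := hD
      rw [Matroid.restrict_dep_iff] at hDdep
      refine ⟨⟨hDdep.1, hDdep.2.trans hFE⟩, fun D' hD' hdep' => ?_⟩
      exact hDmin D' hD' (Matroid.restrict_dep_iff.mpr ⟨hdep'.not_indep, hD'.subset.trans hDdep.2⟩)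
    · refine subset_antisymm (fun x hx => ?_) (sUnion_subset fun C hC => ?_)
      · obtain ⟨y, hy, hye⟩ := Set.exists_ne_of_one_lt_ncard (lt_of_lt_of_le one_lt_two h2) x
        rcases hres.2 x hx y hy with rfl | ⟨C, hC, hxC, _⟩
        · exact absurd rfl hye
        · exact ⟨C, hC, hxC⟩
      · exact (Matroid.restrict_dep_iff.mp hC.1).2
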